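/- For every integer N ≥ 2 and every p ∈ (0,1) with p ≠ 1/2, one has H(N,p) < H(N,1/2). In other words, for fixed N ≥ 2 the average encoding efficiency H(N,p) is uniquely maximized over p ∈ (0,1) at p = 1/2. -/

import Mathlib

open Finset

/-- Average encoding efficiency
`H N p = (1/N) ∑_{k=1}^{N-1} C(N,k) p^k (1-p)^(N-k) log₂ C(N,k)`. -/
noncomputable def H (N : ℕ) (p : ℝ) : ℝ :=
  (1 / (N : ℝ)) * ∑ k ∈ Finset.Ico 1 N,
    (N.choose k : ℝ) * p ^ k * (1 - p) ^ (N - k) * Real.logb 2 (N.choose k)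

namespace HAux

noncomputable def L (N k : ℕ) : ℝ := Real.logb 2 (N.choose k)

lemma L_symm (N k : ℕ) (h : k ≤ N) : L N (N - k) = L N k := by
  simp [L, Nat.choose_symm h]

/-- Extended sum. -/
noncomputable def F (N : ℕ) (p : ℝ) : ℝ :=
  ∑ k ∈ Finset.range (N + 1), (N.choose k : ℝ) * p ^ k * (1 - p) ^ (N - k) * L N k

lemma H_eq (N : ℕ) (hN : 1 ≤ N) (p : ℝ) : H N p = (1 / (N : ℝ)) * F N p := by
  unfold H F L
  congr 1
  rw [Finset.sum_range_succ, Finset.range_eq_Ico,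
    Finset.sum_eq_sum_Ico_succ_bot (by omega : 0 < N)]
  simp

/-- The derivative of `F N`. -/
noncomputable def G (N : ℕ) (p : ℝ) : ℝ :=
  (N : ℝ) * ∑ k ∈ Finset.range N,
    ((N - 1).choose k : ℝ) * (L N (k + 1) - L N k) * p ^ k * (1 - p) ^ (N - 1 - k)

lemma hasDerivAt_F (N : ℕ) (hN : 1 ≤ N) (p : ℝ) : HasDerivAt (F N) (G N p) p := by
  have key : ∀ k ∈ Finset.range (N + 1),
      HasDerivAt (fun q : ℝ => (N.choose k : ℝ) * q ^ k * (1 - q) ^ (N - k) * L N k)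
        ((N.choose k : ℝ) * L N k * ((k : ℝ) * p ^ (k - 1) * (1 - p) ^ (N - k))
          - (N.choose k : ℝ) * L N k * (((N - k : ℕ) : ℝ) * (p ^ k * (1 - p) ^ (N - k - 1)))) p := by
    intro k _
    have h2 : HasDerivAt (fun q : ℝ => (1 - q) ^ (N - k))
        (((N - k : ℕ) : ℝ) * (1 - p) ^ (N - k - 1) * (-1)) p := by
      exact (hasDerivAt_pow (N - k) (1 - p)).comp p ((hasDerivAt_id p).const_sub 1)
    have h := (((hasDerivAt_pow k p).fun_mul h2).const_mul ((N.choose k : ℝ))).mul_const (L N k)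
    convert h using 1
    · rfl
    · rfl
    · funext q; ring
    · ring
  have hsum := HasDerivAt.fun_sum key
  have hF : F N = fun q : ℝ => ∑ k ∈ Finset.range (N + 1),
      (N.choose k : ℝ) * q ^ k * (1 - q) ^ (N - k) * L N k := rfl
  rw [hF]
  convert hsum using 1
  · rfl
  · rfl
  rw [Finset.sum_sub_distrib, Finset.sum_range_succ' (fun k =>
      (N.choose k : ℝ) * L N k * ((k : ℝ) * p ^ (k - 1) * (1 - p) ^ (N - k))),
    Finset.sum_range_succ]
  simp only [Nat.cast_zero, zero_mul, mul_zero, add_zero, Nat.sub_self, sub_zero]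
  rw [G, Finset.mul_sum, ← Finset.sum_sub_distrib]
  apply Finset.sum_congr rfl
  intro k hk
  have hkN : k < N := Finset.mem_range.mp hk
  have e1 : N - (k + 1) = N - 1 - k := by omega
  have e2 : N - k - 1 = N - 1 - k := by omega
  have e3 : k + 1 - 1 = k := by omega
  rw [e1, e2, e3]
  have hA : N.choose (k + 1) * (k + 1) = N * (N - 1).choose k := by
    have h := Nat.add_one_mul_choose_eq (N - 1) k
    have hN' : N - 1 + 1 = N := by omega
    simp only [Nat.succ_eq_add_one, hN'] at h
    exact h.symm
  have hB : N.choose k * (N - k) = N * (N - 1).choose k := by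
    rw [← Nat.choose_succ_right_eq]; exact hA
  have hA' : (N.choose (k + 1) : ℝ) * ((k : ℝ) + 1) = (N : ℝ) * ((N - 1).choose k : ℝ) := by
    exact_mod_cast congrArg (Nat.cast : ℕ → ℝ) hA
  have hB' : (N.choose k : ℝ) * ((N - k : ℕ) : ℝ) = (N : ℝ) * ((N - 1).choose k : ℝ) := by
    exact_mod_cast congrArg (Nat.cast : ℕ → ℝ) hB
  push_cast
  linear_combination L N k * p ^ k * (1 - p) ^ (N - 1 - k) * hB'
    - L N (k + 1) * p ^ k * (1 - p) ^ (N - 1 - k) * hA'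

lemma hasDerivAt_H (N : ℕ) (hN : 1 ≤ N) (p : ℝ) :
    HasDerivAt (H N) ((1 / (N : ℝ)) * G N p) p := by
  have h := (hasDerivAt_F N hN p).const_mul (1 / (N : ℝ))
  have hfun : H N = fun q => (1 / (N : ℝ)) * F N q := funext (H_eq N hN)
  rw [hfun]
  exact h

lemma sum_pos (N : ℕ) (hN : 2 ≤ N) (p : ℝ) (hp0 : 0 < p) (hp : p < 1 / 2) :
    0 < ∑ k ∈ Finset.range N,
      ((N - 1).choose k : ℝ) * (L N (k + 1) - L N k) * p ^ k * (1 - p) ^ (N - 1 - k) := by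
  have hq0 : (0:ℝ) < 1 - p := by linarith
  have hpq : p < 1 - p := by linarith
  set M := N - 1 with hM
  have hMN : N = M + 1 := by omega
  have hM1 : 1 ≤ M := by omega
  rw [show Finset.range N = Finset.range (M + 1) from by rw [← hMN]]
  set S := ∑ k ∈ Finset.range (M + 1),
    (M.choose k : ℝ) * (L N (k + 1) - L N k) * p ^ k * (1 - p) ^ (M - k) with hS
  have hrefl : S = ∑ k ∈ Finset.range (M + 1),
      (M.choose (M - k) : ℝ) * (L N (M - k + 1) - L N (M - k)) * p ^ (M - k)
        * (1 - p) ^ (M - (M - k)) := by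
    rw [hS]
    have h := Finset.sum_range_reflect
      (fun k => (M.choose k : ℝ) * (L N (k + 1) - L N k) * p ^ k * (1 - p) ^ (M - k)) (M + 1)
    simp only [Nat.add_sub_cancel] at h
    exact h.symm
  have hS2 : S = ∑ k ∈ Finset.range (M + 1),
      -((M.choose k : ℝ) * (L N (k + 1) - L N k) * p ^ (M - k) * (1 - p) ^ k) := by
    rw [hrefl]
    apply Finset.sum_congr rfl
    intro k hk
    have hkM : k ≤ M := Nat.lt_succ_iff.mp (Finset.mem_range.mp hk)
    have e1 : L N (M - k + 1) = L N k := by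
      rw [show M - k + 1 = N - k by omega]; exact L_symm N k (by omega)
    have e2 : L N (M - k) = L N (k + 1) := by
      rw [show M - k = N - (k + 1) by omega]; exact L_symm N (k + 1) (by omega)
    rw [Nat.choose_symm hkM, Nat.sub_sub_self hkM, e1, e2]
    ring
  have htwo : 2 * S = ∑ k ∈ Finset.range (M + 1),
      (M.choose k : ℝ) * (L N (k + 1) - L N k) *
        (p ^ k * (1 - p) ^ (M - k) - p ^ (M - k) * (1 - p) ^ k) := by
    rw [two_mul]
    nth_rewrite 2 [hS2]
    nth_rewrite 1 [hS]
    rw [← Finset.sum_add_distrib]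
    apply Finset.sum_congr rfl
    intro k _
    ring
  have hpos : 0 < ∑ k ∈ Finset.range (M + 1),
      (M.choose k : ℝ) * (L N (k + 1) - L N k) *
        (p ^ k * (1 - p) ^ (M - k) - p ^ (M - k) * (1 - p) ^ k) := by
    apply Finset.sum_pos'
    · intro k hk
      have hkM : k ≤ M := Nat.lt_succ_iff.mp (Finset.mem_range.mp hk)
      have hck : 0 < N.choose k := Nat.choose_pos (by omega)
      have hck1 : 0 < N.choose (k + 1) := Nat.choose_pos (by omega)
      rcases lt_trichotomy (2 * k + 1) N with hlt | heq | hgt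
      · -- increasing part: both factors positive
        have hcc : N.choose k < N.choose (k + 1) := by
          have h := Nat.choose_succ_right_eq N k
          have h2 : N.choose k * (k + 1) < N.choose k * (N - k) :=
            mul_lt_mul_of_pos_left (by omega) hck
          have h3 : N.choose k * (k + 1) < N.choose (k + 1) * (k + 1) := by rw [h]; exact h2
          exact lt_of_mul_lt_mul_right h3 (Nat.zero_le _)
        have hg : 0 < L N (k + 1) - L N k := by
          have := Real.logb_lt_logb (by norm_num : (1:ℝ) < 2)
            (Nat.cast_pos.mpr hck) (Nat.cast_lt.mpr hcc)
          simp only [L]; linarith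
        have hdiff : 0 < p ^ k * (1 - p) ^ (M - k) - p ^ (M - k) * (1 - p) ^ k := by
          rw [show (1 - p) ^ (M - k) = (1 - p) ^ k * (1 - p) ^ (M - 2 * k) by
              rw [← pow_add]; congr 1; omega,
            show p ^ (M - k) = p ^ k * p ^ (M - 2 * k) by
              rw [← pow_add]; congr 1; omega]
          have h1 : p ^ (M - 2 * k) < (1 - p) ^ (M - 2 * k) :=
            pow_lt_pow_left₀ hpq hp0.le (by omega)
          nlinarith [mul_pos (mul_pos (pow_pos hp0 k) (pow_pos hq0 k)) (sub_pos.mpr h1)]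
        have hc : (0:ℝ) < (M.choose k : ℝ) := by
          exact_mod_cast Nat.choose_pos hkM
        positivity
      · -- middle: first factor zero
        have hcc : N.choose (k + 1) = N.choose k := by
          have h := Nat.choose_succ_right_eq N k
          have hNk : N - k = k + 1 := by omega
          rw [hNk] at h
          exact Nat.eq_of_mul_eq_mul_right (by omega) h
        have hz : L N (k + 1) - L N k = 0 := by simp [L, hcc]
        rw [hz]
        simp
      · -- decreasing part: both factors negative
        have hcc : N.choose (k + 1) < N.choose k := by
          have h := Nat.choose_succ_right_eq N k
          have h2 : N.choose k * (N - k) < N.choose k * (k + 1) :=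
            mul_lt_mul_of_pos_left (by omega) hck
          have h3 : N.choose (k + 1) * (k + 1) < N.choose k * (k + 1) := by rw [h]; exact h2
          exact lt_of_mul_lt_mul_right h3 (Nat.zero_le _)
        have hg : L N (k + 1) - L N k < 0 := by
          have := Real.logb_lt_logb (by norm_num : (1:ℝ) < 2)
            (Nat.cast_pos.mpr hck1) (Nat.cast_lt.mpr hcc)
          simp only [L]; linarith
        have hdiff : p ^ k * (1 - p) ^ (M - k) - p ^ (M - k) * (1 - p) ^ k < 0 := by
          rw [show p ^ k = p ^ (M - k) * p ^ (2 * k - M) by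
              rw [← pow_add]; congr 1; omega,
            show (1 - p) ^ k = (1 - p) ^ (M - k) * (1 - p) ^ (2 * k - M) by
              rw [← pow_add]; congr 1; omega]
          have h1 : p ^ (2 * k - M) < (1 - p) ^ (2 * k - M) :=
            pow_lt_pow_left₀ hpq hp0.le (by omega)
          nlinarith [mul_pos (mul_pos (pow_pos hp0 (M - k)) (pow_pos hq0 (M - k)))
            (sub_pos.mpr h1)]
        have hc : (0:ℝ) < (M.choose k : ℝ) := Nat.cast_pos.mpr (Nat.choose_pos hkM)
        nlinarith [mul_pos hc (mul_pos_of_neg_of_neg hg hdiff)]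
    · refine ⟨0, Finset.mem_range.mpr (by omega), ?_⟩
      simp only [Nat.choose_zero_right, Nat.cast_one, pow_zero, Nat.sub_zero, one_mul, mul_one]
      have hL1 : 0 < L N 1 - L N 0 := by
        simp only [L, Nat.choose_one_right, Nat.choose_zero_right, Nat.cast_one,
          Real.logb_one]
        have := Real.logb_pos (by norm_num : (1:ℝ) < 2)
          (by exact_mod_cast (by omega : 1 < N) : (1:ℝ) < (N:ℝ))
        linarith
      have hdiff : 0 < (1 - p) ^ M - p ^ M := by
        have := pow_lt_pow_left₀ hpq hp0.le (by omega : M ≠ 0)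
        linarith
      nlinarith [hL1, hdiff]
  linarith

lemma H_mono (N : ℕ) (hN : 2 ≤ N) : StrictMonoOn (H N) (Set.Icc (0:ℝ) (1/2)) := by
  apply strictMonoOn_of_deriv_pos (convex_Icc _ _)
  · exact fun x _ =>
      (hasDerivAt_H N (by omega) x).differentiableAt.continuousAt.continuousWithinAt
  · intro x hx
    rw [interior_Icc] at hx
    rw [(hasDerivAt_H N (by omega) x).deriv]
    have hS := sum_pos N hN x hx.1 hx.2
    have hNpos : (0:ℝ) < N := by exact_mod_cast (by omega : 0 < N)
    unfold G
    have h2 : 0 < (N : ℝ) * ∑ k ∈ Finset.range N,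
        ((N - 1).choose k : ℝ) * (L N (k + 1) - L N k) * x ^ k * (1 - x) ^ (N - 1 - k) :=
      mul_pos hNpos hS
    positivity

lemma H_symm (N : ℕ) (p : ℝ) : H N (1 - p) = H N p := by
  unfold H
  congr 1
  rw [show (1 - (1 - p)) = p by ring]
  refine Finset.sum_nbij' (fun k => N - k) (fun k => N - k) ?_ ?_ ?_ ?_ ?_
  · intro a ha
    simp only [Finset.mem_Ico] at ha ⊢
    omega
  · intro a ha
    simp only [Finset.mem_Ico] at ha ⊢
    omega
  · intro a ha
    simp only [Finset.mem_Ico] at ha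
    show N - (N - a) = a
    omega
  · intro a ha
    simp only [Finset.mem_Ico] at ha
    show N - (N - a) = a
    omega
  · intro a ha
    simp only [Finset.mem_Ico] at ha
    show _ = (N.choose (N - a) : ℝ) * p ^ (N - a) * (1 - p) ^ (N - (N - a)) *
      Real.logb 2 (N.choose (N - a))
    have h1 : N.choose (N - a) = N.choose a := Nat.choose_symm (by omega)
    have h2 : N - (N - a) = a := Nat.sub_sub_self (by omega)
    rw [h1, h2]
    ring

end HAux

/-- For every integer `N ≥ 2` and every `p ∈ (0,1)` with `p ≠ 1/2`,
`H(N,p) < H(N,1/2)`: the average encoding efficiency is uniquely maximized at `p = 1/2`. -/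
theorem H_lt_H_half (N : ℕ) (hN : 2 ≤ N) (p : ℝ) (hp0 : 0 < p) (hp1 : p < 1)
    (hp : p ≠ 1 / 2) : H N p < H N (1 / 2) := by
  rcases lt_or_gt_of_ne hp with h | h
  · exact HAux.H_mono N hN ⟨hp0.le, h.le⟩ ⟨by norm_num, le_refl _⟩ h
  · rw [← HAux.H_symm N p]
    exact HAux.H_mono N hN ⟨by linarith, by linarith⟩ ⟨by norm_num, le_refl _⟩ (by linarith)
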